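/- Let P be a set of pairs whose lexicographic order by second component lists elements of two colours (red from P, blue from Q). Suppose (P1,P2) ∈ P and (Q1,Q2) ∈ Q achieve maxPairLCP(P,Q), with |P1| ≤ |Q1| and (Q1,Q2) preceding (P1,P2) in the order, and all first components are prefixes of a common string Y. Let (Y1,Y2) be the latest element of Q preceding (P1,P2) with |Y1| ≥ |P1|. Then LCP(P1,Y1) + LCP(P2,Y2) ≥ LCP(P1,Q1) + LCP(P2,Q2). -/

import Mathlib

/-- Length of the longest common prefix of two lists. -/
def lcp {α : Type*} [DecidableEq α] : List α → List α → ℕ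
  | a :: as, b :: bs => if a = b then lcp as bs + 1 else 0
  | _, _ => 0

/-- `maxPairLCP(P, Q) = max { LCP(P1,Q1) + LCP(P2,Q2) : (P1,P2) ∈ P, (Q1,Q2) ∈ Q }`. -/
noncomputable def maxPairLCP {α : Type*} [DecidableEq α]
    (P Q : Set (List α × List α)) : ℕ :=
  sSup {v | ∃ p ∈ P, ∃ q ∈ Q, v = lcp p.1 q.1 + lcp p.2 q.2}

lemma lcp_comm {α : Type*} [DecidableEq α] : ∀ a b : List α, lcp a b = lcp b a
  | [], [] => rfl
  | [], _ :: _ => rfl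
  | _ :: _, [] => rfl
  | a :: as, b :: bs => by
    by_cases h : a = b
    · subst h; simp [lcp, lcp_comm as bs]
    · simp [lcp, h, Ne.symm h]

lemma lcp_of_prefix {α : Type*} [DecidableEq α] :
    ∀ a b : List α, a <+: b → lcp a b = a.length
  | [], b, _ => by cases b <;> rfl
  | a :: as, b :: bs, h => by
    obtain ⟨hab, h'⟩ : a = b ∧ as <+: bs := by
      obtain ⟨t, ht⟩ := h
      simp only [List.cons_append, List.cons.injEq] at ht
      exact ⟨ht.1, ⟨t, ht.2⟩⟩
    subst hab
    simp [lcp, lcp_of_prefix as bs h']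
  | a :: as, [], h => by simp at h

lemma cons_le_cons_iff' {α : Type*} [LinearOrder α] {a : α} {as bs : List α}
    (h : a :: as ≤ a :: bs) : as ≤ bs := by
  rcases lt_or_eq_of_le h with h | h
  · have h' : List.Lex (· < ·) (a :: as) (a :: bs) := h
    cases h' with
    | cons h'' => exact le_of_lt h''
    | rel h'' => exact absurd h'' (lt_irrefl a)
  · simp_all

lemma head_le_head {α : Type*} [LinearOrder α] {a b : α} {as bs : List α}
    (h : a :: as ≤ b :: bs) : a ≤ b := by
  rcases lt_or_eq_of_le h with h | h
  · exact List.head_le_of_lt h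
  · simp_all

lemma lcp_mono {α : Type*} [LinearOrder α] :
    ∀ (a b c : List α), a ≤ b → b ≤ c → lcp a c ≤ lcp b c
  | [], _, _, _, _ => by simp [lcp]
  | _ :: _, _, [], _, _ => by simp [lcp]
  | x :: as, b, z :: cs, hab, hbc => by
    by_cases hxz : x = z
    · subst hxz
      cases b with
      | nil =>
        have : x :: as = ([] : List α) := by
          rcases lt_or_eq_of_le hab with h | h
          · have h' : List.Lex (· < ·) (x :: as) [] := h
            cases h'
          · exact h
        simp at this
      | cons y bs =>
        have hxy : x ≤ y := head_le_head hab
        have hyx : y ≤ x := head_le_head hbc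
        have hyx' : y = x := le_antisymm hyx hxy
        subst hyx'
        have h1 : as ≤ bs := cons_le_cons_iff' hab
        have h2 : bs ≤ cs := cons_le_cons_iff' hbc
        simp [lcp, Nat.succ_le_succ (lcp_mono as bs cs h1 h2)]
    · simp [lcp, hxz]

/-- If `(P1,P2) ∈ P` and `(Q1,Q2) ∈ Q` achieve `maxPairLCP(P,Q)` with `|P1| ≤ |Q1|`
and `(Q1,Q2)` preceding `(P1,P2)` in the lexicographic order by second components,
all first components being prefixes of a common string `Y`, and `(Y1,Y2)` is the
latest element of `Q` preceding `(P1,P2)` with `|Y1| ≥ |P1|`, then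
`LCP(P1,Y1) + LCP(P2,Y2) ≥ LCP(P1,Q1) + LCP(P2,Q2)`. -/
theorem stmt18 {α : Type*} [LinearOrder α] (P Q : Set (List α × List α))
    (Y P1 P2 Q1 Q2 Y1 Y2 : List α)
    (hPmem : (P1, P2) ∈ P) (hQmem : (Q1, Q2) ∈ Q)
    (hopt : maxPairLCP P Q = lcp P1 Q1 + lcp P2 Q2)
    (hlen : P1.length ≤ Q1.length)
    (hord : Q2 ≤ P2)
    (hprefix : ∀ e ∈ P ∪ Q, e.1 <+: Y)
    (hYmem : (Y1, Y2) ∈ Q)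
    (hYlen : P1.length ≤ Y1.length)
    (hYord : Y2 ≤ P2)
    (hYlatest : ∀ z ∈ Q, P1.length ≤ z.1.length → z.2 ≤ P2 → z.2 ≤ Y2) :
    lcp P1 Q1 + lcp P2 Q2 ≤ lcp P1 Y1 + lcp P2 Y2 := by
  have hP1Y : P1 <+: Y := hprefix (P1, P2) (Or.inl hPmem)
  have hQ1Y : Q1 <+: Y := hprefix (Q1, Q2) (Or.inr hQmem)
  have hY1Y : Y1 <+: Y := hprefix (Y1, Y2) (Or.inr hYmem)
  have h1 : lcp P1 Q1 = P1.length :=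
    lcp_of_prefix _ _ (List.prefix_of_prefix_length_le hP1Y hQ1Y hlen)
  have h2 : lcp P1 Y1 = P1.length :=
    lcp_of_prefix _ _ (List.prefix_of_prefix_length_le hP1Y hY1Y hYlen)
  have hQ2Y2 : Q2 ≤ Y2 := hYlatest (Q1, Q2) hQmem hlen hord
  have h3 : lcp P2 Q2 ≤ lcp P2 Y2 := by
    rw [lcp_comm P2 Q2, lcp_comm P2 Y2]
    exact lcp_mono Q2 Y2 P2 hQ2Y2 hYord
  omega
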